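/- Let f₁, f₂ : (0,1) → ℝ be measurable functions such that f₁ and the pointwise product f₁·f₂ both belong to L²(0,1), f₁ is not almost everywhere zero, and f₁ and f₁·f₂ are linearly independent (no nonzero real linear combination c₁·f₁ + c₂·(f₁·f₂) vanishes almost everywhere). Define Ω₁ = ∫₀¹∫₀¹ f₁(x)·f₁(y)·K(x,y) dy dx, Ω₂ = ∫₀¹∫₀¹ f₁(x)·f₁(y)·f₂(y)·K(x,y) dy dx, and Ω₃ = ∫₀¹∫₀¹ f₁(x)·f₂(x)·f₁(y)·f₂(y)·K(x,y) dy dx, where K(x,y) = min(x,y) − x·y. Then Ω₂² < Ω₁·Ω₃. -/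

import Mathlib

open MeasureTheory Set

noncomputable section KernelCS

namespace KernelCS

/-- The elementary factor: `e t x = 1_{t < x} - x`. -/
def e (t x : ℝ) : ℝ := (if t < x then (1:ℝ) else 0) - x

abbrev I : Set ℝ := Ioo (0:ℝ) 1

abbrev μ : Measure ℝ := volume.restrict I

lemma measurable_e : Measurable (fun p : ℝ × ℝ => e p.1 p.2) := by
  unfold e
  exact (Measurable.ite (measurableSet_lt measurable_fst measurable_snd)
    measurable_const measurable_const).sub measurable_snd

lemma measurable_e_left (x : ℝ) : Measurable (fun t => e t x) :=
  measurable_e.comp (measurable_id.prodMk measurable_const)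

lemma measurable_e_right (t : ℝ) : Measurable (fun x => e t x) :=
  measurable_e.comp (measurable_const.prodMk measurable_id)

lemma abs_e_le (t : ℝ) {x : ℝ} (hx : x ∈ Icc (0:ℝ) 1) : |e t x| ≤ 1 := by
  unfold e
  rcases hx with ⟨h0, h1⟩
  split <;> rw [abs_le] <;> constructor <;> linarith

instance : IsFiniteMeasure μ := by
  constructor
  rw [Measure.restrict_apply_univ, Real.volume_Ioo]
  norm_num

lemma int_ind {a : ℝ} (ha : a ∈ Icc (0:ℝ) 1) :
    ∫ t in I, (if t < a then (1:ℝ) else 0) = a := by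
  have : (fun t => (if t < a then (1:ℝ) else 0)) = (Iio a).indicator (fun _ => (1:ℝ)) := by
    ext t; simp [indicator, mem_Iio]
  rw [this, integral_indicator_const _ measurableSet_Iio]
  rw [measureReal_def, Measure.restrict_apply measurableSet_Iio]
  have : Iio a ∩ Ioo 0 1 = Ioo 0 a := by
    ext t
    simp only [mem_inter_iff, mem_Iio, mem_Ioo]
    constructor
    · rintro ⟨h1, h2, h3⟩; exact ⟨h2, h1⟩
    · rintro ⟨h1, h2⟩; exact ⟨h2, h1, lt_of_lt_of_le h2 ha.2⟩
  rw [this, Real.volume_Ioo, smul_eq_mul, mul_one, ENNReal.toReal_ofReal]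
  · simp
  · linarith [ha.1]

/-- helper: bounded a.e.-strongly-measurable functions are integrable on finite measures -/
lemma int_of_bound {ν : Measure ℝ} [IsFiniteMeasure ν] {h : ℝ → ℝ}
    (hm : AEStronglyMeasurable h ν) (C : ℝ) (hb : ∀ᵐ x ∂ν, |h x| ≤ C) :
    Integrable h ν :=
  Integrable.mono' (integrable_const C) hm (by simpa [Real.norm_eq_abs] using hb)

lemma kernel_eq {x y : ℝ} (hx : x ∈ I) (hy : y ∈ I) :
    ∫ t in I, e t x * e t y = min x y - x * y := by
  have hexp : ∀ t : ℝ, e t x * e t y =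
      ((if t < min x y then (1:ℝ) else 0) - y * (if t < x then (1:ℝ) else 0))
        - (x * (if t < y then (1:ℝ) else 0) - x * y) := by
    intro t
    by_cases h1 : t < x <;> by_cases h2 : t < y <;>
      simp [e, lt_min_iff, h1, h2] <;> ring
  have hi : ∀ a : ℝ, a ∈ Icc (0:ℝ) 1 →
      Integrable (fun t => (if t < a then (1:ℝ) else 0)) μ := by
    intro a _
    refine int_of_bound ?_ 1 (Filter.Eventually.of_forall fun t => ?_)
    · exact ((measurable_const.ite measurableSet_Iio measurable_const).aestronglyMeasurable)
    · split <;> simp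
  have hx' : x ∈ Icc (0:ℝ) 1 := ⟨hx.1.le, hx.2.le⟩
  have hy' : y ∈ Icc (0:ℝ) 1 := ⟨hy.1.le, hy.2.le⟩
  have hmin : min x y ∈ Icc (0:ℝ) 1 :=
    ⟨le_min hx'.1 hy'.1, min_le_of_left_le hx'.2⟩
  calc ∫ t in I, e t x * e t y
      = ∫ t in I, (((if t < min x y then (1:ℝ) else 0) - y * (if t < x then (1:ℝ) else 0))
        - (x * (if t < y then (1:ℝ) else 0) - x * y)) := by
        exact integral_congr_ae (Filter.Eventually.of_forall fun t => hexp t)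
    _ = min x y - x * y := by
        have h1 : Integrable (fun t => (if t < min x y then (1:ℝ) else 0)) μ := hi _ hmin
        have h2 : Integrable (fun t => y * (if t < x then (1:ℝ) else 0)) μ :=
          (hi _ hx').const_mul y
        have h3 : Integrable (fun t => x * (if t < y then (1:ℝ) else 0)) μ :=
          (hi _ hy').const_mul x
        have h4 : Integrable (fun _ : ℝ => x * y) μ := integrable_const _
        have e0 : ∫ t in I, (((if t < min x y then (1:ℝ) else 0)
              - y * (if t < x then (1:ℝ) else 0))
            - (x * (if t < y then (1:ℝ) else 0) - x * y))
            = (∫ t in I, ((if t < min x y then (1:ℝ) else 0)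
                - y * (if t < x then (1:ℝ) else 0)))
              - ∫ t in I, (x * (if t < y then (1:ℝ) else 0) - x * y) :=
          integral_sub (h1.sub h2) (h3.sub h4)
        have e1 : ∫ t in I, ((if t < min x y then (1:ℝ) else 0)
              - y * (if t < x then (1:ℝ) else 0))
            = (∫ t in I, (if t < min x y then (1:ℝ) else 0))
              - ∫ t in I, y * (if t < x then (1:ℝ) else 0) := integral_sub h1 h2
        have e2 : ∫ t in I, (x * (if t < y then (1:ℝ) else 0) - x * y)
            = (∫ t in I, x * (if t < y then (1:ℝ) else 0)) - ∫ t in I, x * y :=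
          integral_sub h3 h4
        rw [e0, e1, e2]
        rw [int_ind hmin, integral_const_mul, integral_const_mul, int_ind hx', int_ind hy',
          integral_const]
        have : (μ univ).toReal = 1 := by
          rw [Measure.restrict_apply_univ, Real.volume_Ioo]
          norm_num
        rw [measureReal_def, this, one_smul]
        ring

/-- The transform `T g t = ∫ x in I, g x * e t x`. -/
def T (g : ℝ → ℝ) (t : ℝ) : ℝ := ∫ x in I, g x * e t x

lemma measurable_T {g : ℝ → ℝ} (hg : Measurable g) : StronglyMeasurable (T g) := by
  have : StronglyMeasurable (fun p : ℝ × ℝ => g p.2 * e p.1 p.2) :=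
    ((hg.comp measurable_snd).mul measurable_e).stronglyMeasurable
  exact this.integral_prod_right'

lemma abs_T_le {g : ℝ → ℝ} (hgi : Integrable g μ) (t : ℝ) : |T g t| ≤ ∫ x in I, |g x| := by
  have h1 : |T g t| ≤ ∫ x in I, |g x * e t x| := by
    rw [T]
    simpa only [Real.norm_eq_abs] using
      norm_integral_le_integral_norm (μ := μ) (fun x => g x * e t x)
  refine h1.trans (integral_mono_of_nonneg (Filter.Eventually.of_forall fun x => abs_nonneg _)
    ?_ ?_)
  · exact hgi.abs
  · refine (ae_restrict_iff' measurableSet_Ioo).2 (Filter.Eventually.of_forall fun x hx => ?_)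
    show |g x * e t x| ≤ |g x|
    rw [abs_mul]
    calc |g x| * |e t x| ≤ |g x| * 1 :=
          mul_le_mul_of_nonneg_left (abs_e_le t ⟨hx.1.le, hx.2.le⟩) (abs_nonneg _)
      _ = |g x| := mul_one _

lemma integrable_mul_e {g : ℝ → ℝ} (hg : Measurable g) (hgi : Integrable g μ) (t : ℝ) :
    Integrable (fun x => g x * e t x) μ := by
  refine Integrable.mono' hgi.abs ((hg.mul (measurable_e_right t)).aestronglyMeasurable) ?_
  refine (ae_restrict_iff' measurableSet_Ioo).2 (Filter.Eventually.of_forall fun x hx => ?_)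
  rw [Real.norm_eq_abs, abs_mul]
  calc |g x| * |e t x| ≤ |g x| * 1 :=
        mul_le_mul_of_nonneg_left (abs_e_le t ⟨hx.1.le, hx.2.le⟩) (abs_nonneg _)
    _ = |g x| := mul_one _

lemma integrable_fst_comp {h : ℝ → ℝ} (hm : Measurable h) (hi : Integrable h μ) :
    Integrable (fun p : ℝ × ℝ => h p.1) (μ.prod μ) := by
  have hmeas : AEStronglyMeasurable (fun p : ℝ × ℝ => h p.1) (μ.prod μ) :=
    (hm.comp measurable_fst).aestronglyMeasurable
  rw [integrable_prod_iff hmeas]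
  constructor
  · exact Filter.Eventually.of_forall fun x => by simpa using integrable_const (μ := μ) (h x)
  · simp only [integral_const, smul_eq_mul]
    exact (hi.norm.const_mul _).congr (Filter.Eventually.of_forall fun x => by ring)

lemma ae_prod_mem : ∀ᵐ p : ℝ × ℝ ∂(μ.prod μ), p.1 ∈ I ∧ p.2 ∈ I := by
  rw [Measure.prod_restrict]
  refine (ae_restrict_iff' (measurableSet_Ioo.prod measurableSet_Ioo)).2
    (Filter.Eventually.of_forall fun p hp => ?_)
  exact hp

lemma swap_int {F : ℝ → ℝ → ℝ} (hm : Measurable (fun p : ℝ × ℝ => F p.1 p.2))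
    {b : ℝ → ℝ} (hb : Measurable b) (hbi : Integrable b μ)
    (hbd : ∀ x t, x ∈ I → t ∈ I → |F x t| ≤ b x) :
    ∫ x in I, ∫ t in I, F x t = ∫ t in I, ∫ x in I, F x t := by
  apply integral_integral_swap
  refine Integrable.mono' (integrable_fst_comp hb hbi) hm.aestronglyMeasurable ?_
  filter_upwards [ae_prod_mem] with p hp
  exact (Real.norm_eq_abs _) ▸ hbd p.1 p.2 hp.1 hp.2

lemma inner_T {g : ℝ → ℝ} (hg : Measurable g) (hgi : Integrable g μ) {x : ℝ} (hx : x ∈ I) :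
    ∫ y in I, g y * (min x y - x * y) = ∫ t in I, e t x * T g t := by
  have step1 : ∫ y in I, g y * (min x y - x * y)
      = ∫ y in I, ∫ t in I, g y * (e t x * e t y) := by
    refine setIntegral_congr_fun measurableSet_Ioo fun y hy => ?_
    rw [integral_const_mul, kernel_eq hx hy]
  have step2 : ∫ y in I, ∫ t in I, g y * (e t x * e t y)
      = ∫ t in I, ∫ y in I, g y * (e t x * e t y) := by
    refine swap_int ?_ (hg.comp measurable_id).abs hgi.abs fun y t hy ht => ?_
    · refine (hg.comp measurable_fst).mul (Measurable.mul ?_ ?_)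
      · exact measurable_e.comp (measurable_snd.prodMk measurable_const)
      · exact measurable_e.comp (measurable_snd.prodMk measurable_fst)
    · rw [abs_mul, abs_mul]
      have h1 : |e t x| ≤ 1 := abs_e_le t ⟨hx.1.le, hx.2.le⟩
      have h2 : |e t y| ≤ 1 := abs_e_le t ⟨hy.1.le, hy.2.le⟩
      calc |g y| * (|e t x| * |e t y|) ≤ |g y| * (1 * 1) := by
            refine mul_le_mul_of_nonneg_left ?_ (abs_nonneg _)
            exact mul_le_mul h1 h2 (abs_nonneg _) zero_le_one
        _ = |g y| := by ring
  have step3 : ∀ t : ℝ, ∫ y in I, g y * (e t x * e t y) = e t x * T g t := by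
    intro t
    rw [T, ← integral_const_mul]
    exact integral_congr_ae (Filter.Eventually.of_forall fun y => by ring)
  rw [step1, step2]
  exact integral_congr_ae (Filter.Eventually.of_forall fun t => step3 t)

lemma bilinear {f g : ℝ → ℝ} (hf : Measurable f) (hg : Measurable g)
    (hfi : Integrable f μ) (hgi : Integrable g μ) :
    ∫ x in I, ∫ y in I, f x * g y * (min x y - x * y) = ∫ t in I, T f t * T g t := by
  have step1 : ∫ x in I, ∫ y in I, f x * g y * (min x y - x * y)
      = ∫ x in I, ∫ t in I, f x * (e t x * T g t) := by
    refine setIntegral_congr_fun measurableSet_Ioo fun x hx => ?_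
    have : ∫ y in I, f x * g y * (min x y - x * y)
        = f x * ∫ y in I, g y * (min x y - x * y) := by
      rw [← integral_const_mul]
      exact integral_congr_ae (Filter.Eventually.of_forall fun y => by ring)
    rw [this, inner_T hg hgi hx, ← integral_const_mul]
  have Cg : ℝ := 0
  have step2 : ∫ x in I, ∫ t in I, f x * (e t x * T g t)
      = ∫ t in I, ∫ x in I, f x * (e t x * T g t) := by
    refine swap_int ?_ (hf.abs.const_mul (∫ x in I, |g x|))
      ((hfi.abs.const_mul _).congr (Filter.Eventually.of_forall fun x => by ring))
      fun x t hx ht => ?_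
    · refine (hf.comp measurable_fst).mul (Measurable.mul ?_ ?_)
      · exact measurable_e.comp (measurable_snd.prodMk measurable_fst)
      · exact (measurable_T hg).measurable.comp measurable_snd
    · rw [abs_mul, abs_mul]
      have h1 : |e t x| ≤ 1 := abs_e_le t ⟨hx.1.le, hx.2.le⟩
      have h2 : |T g t| ≤ ∫ x in I, |g x| := abs_T_le hgi t
      have hCg : 0 ≤ ∫ x in I, |g x| := integral_nonneg fun x => abs_nonneg _
      calc |f x| * (|e t x| * |T g t|) ≤ |f x| * (1 * (∫ x in I, |g x|)) := by
            refine mul_le_mul_of_nonneg_left ?_ (abs_nonneg _)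
            exact mul_le_mul h1 h2 (abs_nonneg _) zero_le_one
        _ = (∫ x in I, |g x|) * |f x| := by ring
  have step3 : ∀ t : ℝ, ∫ x in I, f x * (e t x * T g t) = T f t * T g t := by
    intro t
    have : ∫ x in I, f x * (e t x * T g t) = (∫ x in I, f x * e t x) * T g t := by
      rw [← integral_mul_const]
      exact integral_congr_ae (Filter.Eventually.of_forall fun x => by ring)
    rw [this]; rfl
  rw [step1, step2]
  exact integral_congr_ae (Filter.Eventually.of_forall fun t => step3 t)

lemma T_zero {g : ℝ → ℝ} (hg : Measurable g) (hgi : Integrable g μ)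
    (h : ∀ᵐ t ∂μ, T g t = 0) : ∀ᵐ x ∂μ, g x = 0 := by
  set gI : ℝ → ℝ := I.indicator g with hgI_def
  have hgIm : Measurable gI := hg.indicator measurableSet_Ioo
  have hgIi : Integrable gI volume := (integrable_indicator_iff measurableSet_Ioo).2 hgi
  set c : ℝ := ∫ x in I, g x * x with hc_def
  set H : ℝ → ℝ := fun t => ∫ s in (1:ℝ)..t, gI s with hH_def
  have hHcont : Continuous H := hgIi.continuous_primitive 1
  -- key pointwise identity on I
  have key : ∀ t ∈ I, T g t = -(H t) - c := by
    intro t ht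
    have hsplit : ∀ x : ℝ, g x * e t x = (Ioi t).indicator g x - g x * x := by
      intro x
      by_cases hx : t < x
      · simp only [e, Set.indicator_apply, mem_Ioi, if_pos hx]; ring
      · simp only [e, Set.indicator_apply, mem_Ioi, if_neg hx]; ring
    have hint1 : Integrable ((Ioi t).indicator g) μ :=
      hgi.indicator measurableSet_Ioi
    have hint2 : Integrable (fun x => g x * x) μ := by
      refine Integrable.mono' hgi.abs ((hg.mul measurable_id).aestronglyMeasurable) ?_
      refine (ae_restrict_iff' measurableSet_Ioo).2 (Filter.Eventually.of_forall fun x hx => ?_)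
      rw [Real.norm_eq_abs, abs_mul]
      calc |g x| * |x| ≤ |g x| * 1 := by
            refine mul_le_mul_of_nonneg_left ?_ (abs_nonneg _)
            rw [abs_le]; exact ⟨by linarith [hx.1], hx.2.le⟩
        _ = |g x| := mul_one _
    have e1 : T g t = (∫ x in I, (Ioi t).indicator g x) - c := by
      rw [T, hc_def]
      rw [integral_congr_ae (Filter.Eventually.of_forall hsplit)]
      exact integral_sub hint1 hint2
    have e2 : ∫ x in I, (Ioi t).indicator g x = ∫ x in Ioo t 1, g x := by
      rw [setIntegral_indicator measurableSet_Ioi]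
      have hset : I ∩ Ioi t = Ioo t 1 := by
        ext z
        simp only [mem_inter_iff, mem_Ioo, mem_Ioi]
        constructor
        · rintro ⟨⟨h1, h2⟩, h3⟩; exact ⟨h3, h2⟩
        · rintro ⟨h1, h2⟩; exact ⟨⟨lt_trans ht.1 h1, h2⟩, h1⟩
      rw [hset]
    have e3 : ∫ x in Ioo t 1, g x = -(H t) := by
      have h1 : ∫ s in t..(1:ℝ), gI s = ∫ s in Ioc t 1, gI s :=
        intervalIntegral.integral_of_le ht.2.le
      have h2 : ∫ s in Ioc t 1, gI s = ∫ s in Ioc t 1 ∩ I, g s := by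
        rw [hgI_def, setIntegral_indicator measurableSet_Ioo]
      have h3 : Ioc t 1 ∩ I = Ioo t 1 := by
        ext z
        simp only [mem_inter_iff, mem_Ioc, mem_Ioo]
        constructor
        · rintro ⟨⟨ha, hb⟩, hc, hd⟩; exact ⟨ha, hd⟩
        · rintro ⟨ha, hb⟩; exact ⟨⟨ha, hb.le⟩, lt_trans ht.1 ha, hb⟩
      have h4 : ∫ s in t..(1:ℝ), gI s = -(H t) := by
        rw [hH_def]
        show ∫ s in t..(1:ℝ), gI s = -∫ s in (1:ℝ)..t, gI s
        exact intervalIntegral.integral_symm 1 t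
      rw [← h4, h1, h2, h3]
    rw [e1, e2, e3]

  -- H is constant -c on I
  have hHI : ∀ t ∈ I, H t = -c := by
    have hmeasH : MeasurableSet {t : ℝ | H t ≠ -c} :=
      (hHcont.measurable (measurableSet_singleton (-c))).compl
    have hae : ∀ᵐ t ∂μ, H t = -c := by
      filter_upwards [h, ae_restrict_mem measurableSet_Ioo] with t h0 ht
      have h1 := key t ht
      rw [h0] at h1
      linarith
    have hnull : volume ({t : ℝ | H t ≠ -c} ∩ I) = 0 := by
      have h2 := ae_iff.1 hae
      rwa [Measure.restrict_apply hmeasH] at h2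
    have hopen : IsOpen ({t : ℝ | H t ≠ -c} ∩ I) := by
      refine IsOpen.inter ?_ isOpen_Ioo
      exact isOpen_compl_singleton.preimage hHcont
    intro t ht
    by_contra hne
    have hmem : t ∈ ({t : ℝ | H t ≠ -c} ∩ I) := ⟨hne, ht⟩
    rw [hopen.eq_empty_of_measure_zero hnull] at hmem
    exact hmem
  have hIcc : ∀ t ∈ Icc (0:ℝ) 1, H t = -c := by
    have hclosed : IsClosed (H ⁻¹' {-c}) := isClosed_singleton.preimage hHcont
    have hsub : I ⊆ H ⁻¹' {-c} := fun t ht => hHI t ht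
    have hcl := closure_minimal hsub hclosed
    rw [closure_Ioo (by norm_num : (0:ℝ) ≠ 1)] at hcl
    exact fun t ht => hcl ht
  have hc0 : c = 0 := by
    have h1 : H 1 = -c := hIcc 1 (by norm_num)
    have h2 : H 1 = 0 := intervalIntegral.integral_same
    linarith
  have hH0 : ∀ t ∈ Icc (0:ℝ) 1, H t = 0 := fun t ht => by
    rw [hIcc t ht, hc0, neg_zero]
  have hii : ∀ a b : ℝ, IntervalIntegrable gI volume a b := fun a b => hgIi.intervalIntegrable
  -- all Ioc-integrals of gI vanish
  have hIoc : ∀ a b : ℝ, ∫ x in Ioc a b, gI x = 0 := by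
    intro a b
    rcases le_or_gt b a with hba | hab
    · rw [Ioc_eq_empty (not_lt.2 hba)]
      simp
    · set a' := max 0 (min a 1) with ha'_def
      set b' := max 0 (min b 1) with hb'_def
      have ha'm : a' ∈ Icc (0:ℝ) 1 := ⟨le_max_left _ _, max_le (by norm_num) (min_le_right a 1)⟩
      have hb'm : b' ∈ Icc (0:ℝ) 1 := ⟨le_max_left _ _, max_le (by norm_num) (min_le_right b 1)⟩
      have hab' : a' ≤ b' := max_le_max le_rfl (min_le_min hab.le le_rfl)
      have hseteq : Ioc a b ∩ I = Ioc a' b' ∩ I := by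
        ext z
        simp only [mem_inter_iff, mem_Ioc, mem_Ioo]
        constructor
        · rintro ⟨⟨h1, h2⟩, h3, h4⟩
          refine ⟨⟨max_lt h3 (lt_of_le_of_lt (min_le_left a 1) h1),
            le_max_of_le_right (le_min h2 h4.le)⟩, h3, h4⟩
        · rintro ⟨⟨h1, h2⟩, h3, h4⟩
          refine ⟨⟨?_, ?_⟩, h3, h4⟩
          · rcases min_lt_iff.1 (max_lt_iff.1 h1).2 with h5 | h5
            · exact h5
            · linarith
          · rcases le_max_iff.1 h2 with h5 | h5
            · linarith
            · exact (le_min_iff.1 h5).1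
      have hstep : ∫ x in Ioc a b, gI x = ∫ x in Ioc a' b', gI x := by
        rw [hgI_def, setIntegral_indicator measurableSet_Ioo,
          setIntegral_indicator measurableSet_Ioo, hseteq]
      rw [hstep, ← intervalIntegral.integral_of_le hab']
      have hadj := intervalIntegral.integral_add_adjacent_intervals (hii a' 1) (hii 1 b')
      have hHa' : ∫ x in (1:ℝ)..a', gI x = 0 := hH0 a' ha'm
      have hHb' : ∫ x in (1:ℝ)..b', gI x = 0 := hH0 b' hb'm
      have ha1 : ∫ x in a'..(1:ℝ), gI x = 0 := by
        rw [intervalIntegral.integral_symm 1 a', hHa', neg_zero]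
      rw [← hadj, ha1, hHb', add_zero]
  -- equality of the positive and negative part measures
  have hdpm : Measurable (fun x => ENNReal.ofReal (gI x)) :=
    ENNReal.measurable_ofReal.comp hgIm
  have hdmm : Measurable (fun x => ENNReal.ofReal (-gI x)) :=
    ENNReal.measurable_ofReal.comp hgIm.neg
  haveI hmp : IsFiniteMeasure (volume.withDensity (fun x => ENNReal.ofReal (gI x))) :=
    isFiniteMeasure_withDensity_ofReal hgIi.2
  haveI hmm : IsFiniteMeasure (volume.withDensity (fun x => ENNReal.ofReal (-gI x))) :=
    isFiniteMeasure_withDensity_ofReal hgIi.neg.2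
  have heq : volume.withDensity (fun x => ENNReal.ofReal (gI x))
      = volume.withDensity (fun x => ENNReal.ofReal (-gI x)) := by
    refine Measure.ext_of_Ioc _ _ fun a b _ => ?_
    rw [withDensity_apply _ measurableSet_Ioc, withDensity_apply _ measurableSet_Ioc]
    have hint : Integrable gI (volume.restrict (Ioc a b)) := hgIi.restrict
    have h0 : ∫ x in Ioc a b, gI x = 0 := hIoc a b
    rw [integral_eq_lintegral_pos_part_sub_lintegral_neg_part hint] at h0
    have htot : ∀ f : ℝ → ℝ, HasFiniteIntegral f (volume : Measure ℝ) →
        ∫⁻ x, ENNReal.ofReal (f x) < ⊤ := by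
      intro f hf
      refine lt_of_le_of_lt (lintegral_mono fun x => ?_) hf
      rw [Real.enorm_eq_ofReal_abs]
      exact ENNReal.ofReal_le_ofReal (le_abs_self _)
    have hfp : ∫⁻ x in Ioc a b, ENNReal.ofReal (gI x) ≠ ⊤ :=
      ne_of_lt (lt_of_le_of_lt (lintegral_mono' Measure.restrict_le_self le_rfl)
        (htot _ hgIi.2))
    have hfm : ∫⁻ x in Ioc a b, ENNReal.ofReal (-gI x) ≠ ⊤ :=
      ne_of_lt (lt_of_le_of_lt (lintegral_mono' Measure.restrict_le_self le_rfl)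
        (htot _ hgIi.neg.2))
    exact (ENNReal.toReal_eq_toReal_iff' hfp hfm).1 (by linarith)
  have haeq : (fun x => ENNReal.ofReal (gI x)) =ᵐ[(volume : Measure ℝ)]
      (fun x => ENNReal.ofReal (-gI x)) :=
    (withDensity_eq_iff_of_sigmaFinite hdpm.aemeasurable hdmm.aemeasurable).1 heq
  have hgI0 : ∀ᵐ x ∂(volume : Measure ℝ), gI x = 0 := by
    filter_upwards [haeq] with x hx
    by_contra hne
    rcases lt_or_gt_of_ne hne with hlt | hgt
    · have h1 : ENNReal.ofReal (gI x) = 0 := ENNReal.ofReal_eq_zero.2 hlt.le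
      rw [h1] at hx
      have h2 : -gI x ≤ 0 := ENNReal.ofReal_eq_zero.1 hx.symm
      linarith
    · have h1 : ENNReal.ofReal (-gI x) = 0 := ENNReal.ofReal_eq_zero.2 (by linarith)
      rw [h1] at hx
      have h2 : gI x ≤ 0 := ENNReal.ofReal_eq_zero.1 hx
      linarith
  have hres : ∀ᵐ x ∂μ, gI x = 0 := ae_restrict_of_ae hgI0
  filter_upwards [hres, ae_restrict_mem measurableSet_Ioo] with x h1 h2
  rwa [hgI_def, indicator_of_mem h2] at h1

lemma integrable_T_mul {u v : ℝ → ℝ} (hu : Measurable u) (hv : Measurable v)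
    (hui : Integrable u μ) (hvi : Integrable v μ) :
    Integrable (fun t => T u t * T v t) μ := by
  refine int_of_bound (((measurable_T hu).measurable.mul
    (measurable_T hv).measurable).aestronglyMeasurable)
    ((∫ x in I, |u x|) * (∫ x in I, |v x|))
    (Filter.Eventually.of_forall fun t => ?_)
  rw [abs_mul]
  exact mul_le_mul (abs_T_le hui t) (abs_T_le hvi t) (abs_nonneg _)
    (integral_nonneg fun x => abs_nonneg _)

lemma T_pos {u : ℝ → ℝ} (hu : Measurable u) (hui : Integrable u μ)
    (hune : ¬ (∀ᵐ x ∂μ, u x = 0)) : 0 < ∫ t in I, T u t * T u t := by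
  have hnn : 0 ≤ ∫ t in I, T u t * T u t :=
    integral_nonneg fun t => mul_self_nonneg _
  rcases hnn.lt_or_eq with hlt | heq
  · exact hlt
  · exfalso
    have hint : Integrable (fun t => T u t * T u t) μ := integrable_T_mul hu hu hui hui
    have hzero : (fun t => T u t * T u t) =ᵐ[μ] 0 :=
      (integral_eq_zero_iff_of_nonneg_ae
        (Filter.Eventually.of_forall fun t => mul_self_nonneg _) hint).1 heq.symm
    have hTz : ∀ᵐ t ∂μ, T u t = 0 := by
      filter_upwards [hzero] with t ht
      exact mul_self_eq_zero.1 ht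
    exact hune (T_zero hu hui hTz)

lemma T_linear {u v : ℝ → ℝ} (hu : Measurable u) (hv : Measurable v)
    (hui : Integrable u μ) (hvi : Integrable v μ) (a b : ℝ) (t : ℝ) :
    T (fun x => a * u x - b * v x) t = a * T u t - b * T v t := by
  rw [T, T, T]
  have : ∀ x : ℝ, (a * u x - b * v x) * e t x
      = a * (u x * e t x) - b * (v x * e t x) := fun x => by ring
  rw [integral_congr_ae (Filter.Eventually.of_forall this)]
  rw [integral_sub ((integrable_mul_e hu hui t).const_mul a)
    ((integrable_mul_e hv hvi t).const_mul b), integral_const_mul, integral_const_mul]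

end KernelCS

open KernelCS

/-- Cauchy–Bunyakovsky–Schwarz-type strict inequality for the semi-inner product
induced by the Brownian-bridge covariance kernel `K x y = min x y - x * y`:
if `f₁` and `f₁ * f₂` are in `L²(0,1)`, `f₁` is not a.e. zero, and `f₁` and
`f₁ * f₂` are linearly independent (no nonzero linear combination vanishes a.e.),
then `Ω₂² < Ω₁ * Ω₃`. -/
theorem kernel_semi_inner_product_strict_cauchy_schwarz
    (f₁ f₂ : ℝ → ℝ) (hm₁ : Measurable f₁) (hm₂ : Measurable f₂)
    (hL₁ : MemLp f₁ 2 (volume.restrict (Ioo (0:ℝ) 1)))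
    (hL₂ : MemLp (fun x => f₁ x * f₂ x) 2 (volume.restrict (Ioo (0:ℝ) 1)))
    (hne : ¬ (∀ᵐ x ∂(volume.restrict (Ioo (0:ℝ) 1)), f₁ x = 0))
    (hli : ∀ c₁ c₂ : ℝ,
      (∀ᵐ x ∂(volume.restrict (Ioo (0:ℝ) 1)), c₁ * f₁ x + c₂ * (f₁ x * f₂ x) = 0) →
      c₁ = 0 ∧ c₂ = 0) :
    (∫ x in Ioo (0:ℝ) 1, ∫ y in Ioo (0:ℝ) 1,
        f₁ x * f₁ y * f₂ y * (min x y - x * y)) ^ 2 <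
    (∫ x in Ioo (0:ℝ) 1, ∫ y in Ioo (0:ℝ) 1,
        f₁ x * f₁ y * (min x y - x * y)) *
    (∫ x in Ioo (0:ℝ) 1, ∫ y in Ioo (0:ℝ) 1,
        f₁ x * f₂ x * f₁ y * f₂ y * (min x y - x * y)) := by
  set g : ℝ → ℝ := fun x => f₁ x * f₂ x with hg_def
  have hgm : Measurable g := hm₁.mul hm₂
  have hfi : Integrable f₁ μ := hL₁.integrable one_le_two
  have hgi : Integrable g μ := hL₂.integrable one_le_two
  -- rewrite the three double integrals
  have hΩ₁ : ∫ x in Ioo (0:ℝ) 1, ∫ y in Ioo (0:ℝ) 1, f₁ x * f₁ y * (min x y - x * y)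
      = ∫ t in I, T f₁ t * T f₁ t := bilinear hm₁ hm₁ hfi hfi
  have hΩ₂ : ∫ x in Ioo (0:ℝ) 1, ∫ y in Ioo (0:ℝ) 1, f₁ x * f₁ y * f₂ y * (min x y - x * y)
      = ∫ t in I, T f₁ t * T g t := by
    rw [← bilinear hm₁ hgm hfi hgi]
    refine integral_congr_ae (Filter.Eventually.of_forall fun x => ?_)
    exact integral_congr_ae (Filter.Eventually.of_forall fun y => by simp only [hg_def]; ring)
  have hΩ₃ : ∫ x in Ioo (0:ℝ) 1, ∫ y in Ioo (0:ℝ) 1,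
        f₁ x * f₂ x * f₁ y * f₂ y * (min x y - x * y)
      = ∫ t in I, T g t * T g t := by
    rw [← bilinear hgm hgm hgi hgi]
    refine integral_congr_ae (Filter.Eventually.of_forall fun x => ?_)
    exact integral_congr_ae (Filter.Eventually.of_forall fun y => by simp only [hg_def]; ring)
  rw [hΩ₁, hΩ₂, hΩ₃]
  set A : ℝ := ∫ t in I, T f₁ t * T f₁ t with hA_def
  set B : ℝ := ∫ t in I, T f₁ t * T g t with hB_def
  set C : ℝ := ∫ t in I, T g t * T g t with hC_def
  have hA_pos : 0 < A := T_pos hm₁ hfi hne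
  -- the function h = A•g - B•f₁ and its transform
  set h : ℝ → ℝ := fun x => A * g x - B * f₁ x with hh_def
  have hhm : Measurable h := (hgm.const_mul A).sub (hm₁.const_mul B)
  have hhi : Integrable h μ := (hgi.const_mul A).sub (hfi.const_mul B)
  have hTh : ∀ t : ℝ, T h t = A * T g t - B * T f₁ t :=
    T_linear hgm hm₁ hgi hfi A B
  have hh_ne : ¬ (∀ᵐ x ∂μ, h x = 0) := by
    intro hcon
    have := (hli (-B) A (by
      filter_upwards [hcon] with x hx
      simp only [hh_def, hg_def] at hx
      linarith)).2
    exact absurd this hA_pos.ne'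
  have hP_pos : 0 < ∫ t in I, T h t * T h t := T_pos hhm hhi hh_ne
  -- expand the positive quantity
  have hTgTg : Integrable (fun t => T g t * T g t) μ := integrable_T_mul hgm hgm hgi hgi
  have hTfTg : Integrable (fun t => T f₁ t * T g t) μ := integrable_T_mul hm₁ hgm hfi hgi
  have hTfTf : Integrable (fun t => T f₁ t * T f₁ t) μ := integrable_T_mul hm₁ hm₁ hfi hfi
  have hexp : ∫ t in I, T h t * T h t = A * (A * C - B * B) := by
    have hpt : ∀ t : ℝ, T h t * T h t
        = (A * A) * (T g t * T g t) - (2 * A * B) * (T f₁ t * T g t)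
          + (B * B) * (T f₁ t * T f₁ t) := by
      intro t
      rw [hTh t]
      ring
    rw [integral_congr_ae (Filter.Eventually.of_forall hpt)]
    have e1 : ∫ t in I, ((A * A) * (T g t * T g t) - (2 * A * B) * (T f₁ t * T g t)
          + (B * B) * (T f₁ t * T f₁ t))
        = (∫ t in I, ((A * A) * (T g t * T g t) - (2 * A * B) * (T f₁ t * T g t)))
          + ∫ t in I, (B * B) * (T f₁ t * T f₁ t) :=
      integral_add ((hTgTg.const_mul _).sub (hTfTg.const_mul _)) (hTfTf.const_mul _)
    have e2 : ∫ t in I, ((A * A) * (T g t * T g t) - (2 * A * B) * (T f₁ t * T g t))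
        = (∫ t in I, (A * A) * (T g t * T g t))
          - ∫ t in I, (2 * A * B) * (T f₁ t * T g t) :=
      integral_sub (hTgTg.const_mul _) (hTfTg.const_mul _)
    rw [e1, e2, integral_const_mul, integral_const_mul, integral_const_mul]
    rw [← hB_def, ← hC_def]
    ring
  rw [hexp] at hP_pos
  by_contra hcon
  push_neg at hcon
  have h6 : A * (A * C - B * B) ≤ 0 := by
    refine mul_nonpos_of_nonneg_of_nonpos hA_pos.le ?_
    nlinarith [hcon]
  linarith

end KernelCS
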